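/- Let h₁, h₂ be Hermitian operators that anticommute and square to identity, let θ ∈ (0, π/2), and set H_θ = cos(θ)h₁ + sin(θ)h₂. For every real t there exist real t₁, t₂ with exp(itH_θ) = exp(it₁h₁)·exp(it₂h₂)·exp(it₁h₁), namely t₁ = (1/2)·atan2( cos(θ)sin(t)/√(1 - sin²θ sin²t), cos(t)/√(1 - sin²θ sin²t) ) and t₂ = atan2( sin(θ)sin(t), √(1 - sin²θ sin²t) ). -/

import Mathlib

open NormedSpace
open Nat

set_option maxHeartbeats 800000

/-- Two-argument arctangent: `atan2 y x = arg (x + y i)`. -/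
noncomputable def atan2 (y x : ℝ) : ℝ := Complex.arg (x + y * Complex.I)

theorem exp_involution {A : Type*} [NormedRing A] [NormedAlgebra ℂ A] [CompleteSpace A]
    (a : A) (ha : a * a = 1) (s : ℝ) :
    exp ((Complex.I * s) • a) =
      ((Real.cos s : ℂ)) • (1 : A) + (Complex.I * Real.sin s) • a := by
  rw [exp_eq_tsum ℂ]
  refine HasSum.tsum_eq ?_
  have hae : ∀ k : ℕ, a ^ (2 * k) = 1 := fun k => by
    rw [pow_mul, sq, ha, one_pow]
  have hao : ∀ k : ℕ, a ^ (2 * k + 1) = a := fun k => by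
    rw [pow_succ, pow_mul, sq, ha, one_pow, one_mul]
  have hc : HasSum (fun k : ℕ => (((2 * k) ! : ℂ)⁻¹) • ((Complex.I * s) • a) ^ (2 * k))
      ((Real.cos s : ℂ) • (1 : A)) := by
    have := (Complex.hasSum_cos (s : ℂ)).smul_const (1 : A)
    rw [← Complex.ofReal_cos] at this
    convert this using 2 with k
    rw [smul_pow, hae, smul_smul]
    congr 1
    rw [mul_pow, pow_mul, Complex.I_sq]
    have : ((2 * k) ! : ℂ) ≠ 0 := by exact_mod_cast (Nat.factorial_pos _).ne'
    field_simp
    try ring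
  have hs : HasSum (fun k : ℕ => (((2 * k + 1) ! : ℂ)⁻¹) • ((Complex.I * s) • a) ^ (2 * k + 1))
      ((Complex.I * Real.sin s) • a) := by
    have := ((Complex.hasSum_sin (s : ℂ)).mul_left Complex.I).smul_const a
    rw [← Complex.ofReal_sin] at this
    convert this using 2 with k
    rw [smul_pow, hao, smul_smul]
    congr 1
    rw [mul_pow, pow_succ, pow_mul, Complex.I_sq]
    have : ((2 * k + 1) ! : ℂ) ≠ 0 := by exact_mod_cast (Nat.factorial_pos _).ne'
    field_simp
    try ring
  exact hc.even_add_odd hs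

theorem prod3 {A : Type*} [Ring A] [Algebra ℂ A]
    (a b : A) (hab : a * b = -(b * a)) (ha : a * a = 1)
    (x y z w : ℂ) :
    (x • (1 : A) + y • a) * (z • (1 : A) + w • b) * (x • (1 : A) + y • a)
      = ((x * x + y * y) * z) • (1 : A) + (2 * x * y * z) • a
        + ((x * x - y * y) * w) • b := by
  have haba : a * b * a = -b := by
    rw [hab, neg_mul, mul_assoc, ha, mul_one]
  simp only [add_mul, mul_add, smul_mul_smul_comm, one_mul, mul_one]
  rw [haba, ha, hab]
  simp only [smul_neg]
  match_scalars <;> ring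

theorem atan2_cos_sin {y x : ℝ} (h : x ^ 2 + y ^ 2 = 1) :
    Real.cos (atan2 y x) = x ∧ Real.sin (atan2 y x) = y := by
  have habs : ‖(x + y * Complex.I : ℂ)‖ = 1 := by
    rw [Complex.norm_add_mul_I, h, Real.sqrt_one]
  have hne : (x + y * Complex.I : ℂ) ≠ 0 := by
    intro h0; rw [h0, norm_zero] at habs; norm_num at habs
  constructor
  · rw [atan2, Complex.cos_arg hne, habs, div_one]
    simp
  · rw [atan2, Complex.sin_arg, habs, div_one]
    simp

/-- Depth-3 decomposition: for anticommuting Hermitian involutions `h₁ h₂`,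
`θ ∈ (0,π/2)` and `H_θ = cos θ · h₁ + sin θ · h₂`, every `exp(itH_θ)` decomposes
as `exp(it₁h₁) exp(it₂h₂) exp(it₁h₁)` with explicit pulse times. -/
theorem depth3_decomposition
    {A : Type*} [NormedRing A] [StarRing A] [NormedAlgebra ℂ A]
    [CompleteSpace A] [StarModule ℂ A]
    (h₁ h₂ Hθ : A)
    (sa1 : IsSelfAdjoint h₁) (sa2 : IsSelfAdjoint h₂)
    (anti : h₁ * h₂ = -(h₂ * h₁))
    (sq1 : h₁ ^ 2 = 1) (sq2 : h₂ ^ 2 = 1)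
    (θ : ℝ) (hθ0 : 0 < θ) (hθ1 : θ < Real.pi / 2)
    (hHθ : Hθ = (Real.cos θ : ℂ) • h₁ + (Real.sin θ : ℂ) • h₂)
    (t : ℝ) :
    ∃ t₁ t₂ : ℝ,
      t₁ = (1 / 2) * atan2
              (Real.cos θ * Real.sin t / Real.sqrt (1 - Real.sin θ ^ 2 * Real.sin t ^ 2))
              (Real.cos t / Real.sqrt (1 - Real.sin θ ^ 2 * Real.sin t ^ 2)) ∧
      t₂ = atan2 (Real.sin θ * Real.sin t)
              (Real.sqrt (1 - Real.sin θ ^ 2 * Real.sin t ^ 2)) ∧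
      exp ((Complex.I * t) • Hθ) =
        exp ((Complex.I * t₁) • h₁) * exp ((Complex.I * t₂) • h₂) *
        exp ((Complex.I * t₁) • h₁) := by
  have hcosθ : 0 < Real.cos θ :=
    Real.cos_pos_of_mem_Ioo ⟨by linarith [Real.pi_pos], hθ1⟩
  have hlt : Real.sin θ ^ 2 * Real.sin t ^ 2 < 1 := by
    nlinarith [Real.sin_sq_add_cos_sq θ, Real.sin_sq_le_one t, sq_nonneg (Real.sin θ),
      pow_pos hcosθ 2]
  set r : ℝ := Real.sqrt (1 - Real.sin θ ^ 2 * Real.sin t ^ 2) with hrdef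
  have hr2 : r ^ 2 = 1 - Real.sin θ ^ 2 * Real.sin t ^ 2 :=
    Real.sq_sqrt (by linarith)
  have hrpos : 0 < r := Real.sqrt_pos.mpr (by linarith)
  have hrne : r ≠ 0 := hrpos.ne'
  set t₁ : ℝ := (1 / 2) * atan2 (Real.cos θ * Real.sin t / r) (Real.cos t / r) with ht1
  set t₂ : ℝ := atan2 (Real.sin θ * Real.sin t) r with ht2
  refine ⟨t₁, t₂, rfl, rfl, ?_⟩
  -- trig values of t₂
  obtain ⟨hc2, hs2⟩ := atan2_cos_sin (y := Real.sin θ * Real.sin t) (x := r)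
    (by rw [hr2]; ring_nf)
  -- trig values of 2 t₁
  obtain ⟨hcw, hsw⟩ := atan2_cos_sin (y := Real.cos θ * Real.sin t / r) (x := Real.cos t / r)
    (by field_simp; nlinarith [Real.sin_sq_add_cos_sq t, Real.sin_sq_add_cos_sq θ])
  have h2t1 : 2 * t₁ = atan2 (Real.cos θ * Real.sin t / r) (Real.cos t / r) := by
    rw [ht1]; ring
  -- the three key real identities
  have e1 : (Real.cos t₁ ^ 2 - Real.sin t₁ ^ 2) * Real.cos t₂ = Real.cos t := by
    rw [← Real.cos_two_mul', h2t1, hcw, hc2, div_mul_cancel₀ _ hrne]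
  have e2 : 2 * Real.sin t₁ * Real.cos t₁ * Real.cos t₂ = Real.cos θ * Real.sin t := by
    have := Real.sin_two_mul t₁
    rw [h2t1, hsw] at this
    rw [hc2]
    field_simp at this
    linarith
  have e3 : Real.sin t₂ = Real.sin θ * Real.sin t := hs2
  have p1 : Real.sin t₁ ^ 2 + Real.cos t₁ ^ 2 = 1 := Real.sin_sq_add_cos_sq t₁
  -- complex casts
  have ce1 : (Complex.cos (t₁ : ℂ) ^ 2 - Complex.sin (t₁ : ℂ) ^ 2) * Complex.cos (t₂ : ℂ)
      = Complex.cos (t : ℂ) := by exact_mod_cast e1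
  have ce2 : 2 * Complex.sin (t₁ : ℂ) * Complex.cos (t₁ : ℂ) * Complex.cos (t₂ : ℂ)
      = Complex.cos (θ : ℂ) * Complex.sin (t : ℂ) := by exact_mod_cast e2
  have ce3 : Complex.sin (t₂ : ℂ) = Complex.sin (θ : ℂ) * Complex.sin (t : ℂ) := by
    exact_mod_cast e3
  have cp1 : Complex.sin (t₁ : ℂ) ^ 2 + Complex.cos (t₁ : ℂ) ^ 2 = 1 := by exact_mod_cast p1
  have cpθ : Complex.sin (θ : ℂ) ^ 2 + Complex.cos (θ : ℂ) ^ 2 = 1 := by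
    exact_mod_cast Real.sin_sq_add_cos_sq θ
  -- algebra facts
  have e11 : h₁ * h₁ = 1 := by rw [← pow_two]; exact sq1
  have e22 : h₂ * h₂ = 1 := by rw [← pow_two]; exact sq2
  have hsq : Hθ * Hθ = 1 := by
    rw [hHθ]
    simp only [add_mul, mul_add, smul_mul_smul_comm]
    rw [e11, e22, anti]
    simp only [smul_neg, Complex.ofReal_cos, Complex.ofReal_sin]
    match_scalars <;> first | ring1 | linear_combination cpθ
  rw [exp_involution Hθ hsq t, exp_involution h₁ e11 t₁, exp_involution h₂ e22 t₂,
    prod3 h₁ h₂ anti e11, hHθ]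
  simp only [smul_add, smul_smul, Complex.ofReal_cos, Complex.ofReal_sin]
  match_scalars
  · linear_combination -ce1 - Complex.sin (t₁ : ℂ) ^ 2 * Complex.cos (t₂ : ℂ) * Complex.I_sq
  · linear_combination -Complex.I * ce2
  · linear_combination -Complex.I * ce3 - Complex.I * Complex.sin (t₂ : ℂ) * cp1
      + Complex.I * Complex.sin (t₁ : ℂ) ^ 2 * Complex.sin (t₂ : ℂ) * Complex.I_sq
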